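/- Let G' be a directed subgraph of G on all p vertices with p-1 edges indexed by S. If G' contains a directed cycle, then det((N_in^r[S])^T - M_out^r[S]) = 0, since the columns of this matrix indexed by the edges of the cycle sum to the zero vector. -/

import Mathlib

open Matrix

variable {p q : ℕ}

/-- In-incidence matrix: `[N_in]_{ki} = 1` iff edge `k` points to vertex `i`. -/
def Nin (tgt : Fin q → Fin p) : Matrix (Fin q) (Fin p) ℝ :=
  Matrix.of fun k i => if tgt k = i then (1 : ℝ) else 0

/-- Out-incidence matrix: `[M_out]_{ik} = 1` iff edge `k` points from vertex `i`. -/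
def Mout (src : Fin q → Fin p) : Matrix (Fin p) (Fin q) ℝ :=
  Matrix.of fun i k => if src k = i then (1 : ℝ) else 0

/-- Diagonal in-degree matrix. -/
def Din (tgt : Fin q → Fin p) : Matrix (Fin p) (Fin p) ℝ :=
  Matrix.diagonal fun i => (Fintype.card {k : Fin q // tgt k = i} : ℝ)

/-- Diagonal out-degree matrix. -/
def Dout (src : Fin q → Fin p) : Matrix (Fin p) (Fin p) ℝ :=
  Matrix.diagonal fun i => (Fintype.card {k : Fin q // src k = i} : ℝ)

/-- Vertex-adjacency matrix: `[A_v]_{ij} = 1` iff there is an edge from `i` to `j`. -/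
def Av (src tgt : Fin q → Fin p) : Matrix (Fin p) (Fin p) ℝ :=
  Matrix.of fun i j => if ∃ k, src k = i ∧ tgt k = j then (1 : ℝ) else 0

/-- Let `S` index `p - 1` edges of a spanning subgraph `G'`. If `G'` contains a
directed cycle (distinct vertices `v 0, …, v n` and distinct edges `κ j` from `v j`
to `v (j+1)`, indices mod `n + 1`), then `det ((N_in^r[S])ᵀ - M_out^r[S]) = 0`
(columns indexed by the edges of `S` via any bijection `e`, root's row/column deleted). -/
theorem det_B_eq_zero_of_cycle (p q : ℕ) (src tgt : Fin q → Fin p)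
    (hloop : ∀ k, src k ≠ tgt k)
    (hsimple : Function.Injective fun k => (src k, tgt k))
    (r : Fin p) (S : Finset (Fin q)) (hS : S.card = p - 1)
    (e : {i : Fin p // i ≠ r} ≃ {k : Fin q // k ∈ S})
    (hcycle : ∃ (n : ℕ) (v : Fin (n + 1) → Fin p) (κ : Fin (n + 1) → Fin q),
      Function.Injective v ∧ Function.Injective κ ∧
      ∀ j, κ j ∈ S ∧ src (κ j) = v j ∧ tgt (κ j) = v (j + 1)) :
    (Matrix.of fun i j : {i : Fin p // i ≠ r} =>
        Nin tgt (e j).val i.val - Mout src i.val (e j).val).det = 0 := by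
  obtain ⟨n, v, κ, hv, hκ, hκS⟩ := hcycle
  set M : Matrix {i : Fin p // i ≠ r} {i : Fin p // i ≠ r} ℝ :=
    (Matrix.of fun i j : {i : Fin p // i ≠ r} =>
        Nin tgt (e j).val i.val - Mout src i.val (e j).val) with hM
  rw [← Matrix.exists_mulVec_eq_zero_iff]
  set f : Fin (n + 1) → {i : Fin p // i ≠ r} := fun j => e.symm ⟨κ j, (hκS j).1⟩ with hf
  have hfinj : Function.Injective f := by
    intro a b hab
    have := e.symm.injective hab
    exact hκ (congrArg Subtype.val this)
  refine ⟨∑ j : Fin (n + 1), Pi.single (f j) (1 : ℝ), ?_, ?_⟩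
  · intro h
    have h0 := congrFun h (f 0)
    rw [Finset.sum_apply] at h0
    have : ∀ j ∈ Finset.univ, j ≠ (0 : Fin (n+1)) →
        Pi.single (M := fun _ => ℝ) (f j) (1 : ℝ) (f 0) = 0 := by
      intro j _ hj
      rw [Pi.single_apply, if_neg (fun hh => hj (hfinj hh.symm))]
    rw [Finset.sum_eq_single_of_mem 0 (Finset.mem_univ _) this] at h0
    simp at h0
  · funext i
    have hcol : ∀ j, M *ᵥ Pi.single (f j) (1 : ℝ) = fun i => M i (f j) := by
      intro j
      funext i
      simp [Matrix.mulVec_single]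
    have : M *ᵥ (∑ j : Fin (n + 1), Pi.single (f j) (1 : ℝ))
        = ∑ j : Fin (n + 1), fun i => M i (f j) := by
      rw [← Matrix.mulVecLin_apply, map_sum]
      exact Finset.sum_congr rfl fun j _ => by rw [Matrix.mulVecLin_apply, hcol j]
    rw [this]
    rw [Finset.sum_apply]
    have hMval : ∀ j, M i (f j)
        = (if v (j + 1) = i.val then (1:ℝ) else 0) - (if v j = i.val then (1:ℝ) else 0) := by
      intro j
      have he : (e (f j)).val = κ j := by simp [hf]
      simp only [hM, Matrix.of_apply, he, Nin, Mout, (hκS j).2.1, (hκS j).2.2]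
    simp only [hMval]
    rw [Finset.sum_sub_distrib]
    rw [Fintype.sum_equiv (Equiv.addRight (1 : Fin (n+1)))
      (fun j => if v (j + 1) = i.val then (1:ℝ) else 0)
      (fun j => if v j = i.val then (1:ℝ) else 0) (fun j => rfl)]
    simp
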